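/- For every self-adjoint linear relation Λ on G there exists a unique unitary operator U on G (the Cayley transform of Λ) such that Λ = {(x₁,x₂) ∈ G ⊕ G : i(1+U)x₁ = (1−U)x₂}, i.e. Λ = Λ^{i(1+U), 1−U}. -/

import Mathlib

open ContinuousLinearMap

variable {G : Type*} [NormedAddCommGroup G] [InnerProductSpace ℂ G] [CompleteSpace G]

/-- The operator `M^{A,B}` on `G × G`, `(x₁,x₂) ↦ (A x₁ - B x₂, B x₁ + A x₂)`. -/
noncomputable def MAB (A B : G →L[ℂ] G) : (G × G) →L[ℂ] (G × G) :=
  ((A.comp (fst ℂ G G)) - (B.comp (snd ℂ G G))).prod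
    ((B.comp (fst ℂ G G)) + (A.comp (snd ℂ G G)))

/-- The linear relation `Λ^{A,B} = {(x₁,x₂) : A x₁ = B x₂}`. -/
def LambdaAB (A B : G →L[ℂ] G) : Submodule ℂ (G × G) where
  carrier := {p | A p.1 = B p.2}
  add_mem' := by
    intro a b ha hb
    simp only [Set.mem_setOf_eq] at *
    simp [ha, hb]
  zero_mem' := by simp
  smul_mem' := by
    intro c p hp
    simp only [Set.mem_setOf_eq] at *
    simp [hp]

/-- The adjoint of a linear relation. -/
def relAdjoint (Λ : Submodule ℂ (G × G)) : Submodule ℂ (G × G) where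
  carrier := {p | ∀ q ∈ Λ, (inner ℂ p.1 q.2 : ℂ) = inner ℂ p.2 q.1}
  add_mem' := by
    intro a b ha hb q hq
    simp [inner_add_left, ha q hq, hb q hq]
  zero_mem' := by
    intro q hq; simp
  smul_mem' := by
    intro c p hp q hq
    simp [inner_smul_left, hp q hq]

/-- A linear relation is self-adjoint if it equals its adjoint. -/
def IsSelfAdjointRel (Λ : Submodule ℂ (G × G)) : Prop := relAdjoint Λ = Λ

/-- A bounded operator is boundedly invertible if it has a bounded two-sided inverse. -/
def IsBoundedlyInvertible {E F : Type*} [NormedAddCommGroup E] [NormedSpace ℂ E]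
    [NormedAddCommGroup F] [NormedSpace ℂ F] (T : E →L[ℂ] F) : Prop :=
  ∃ T' : F →L[ℂ] E, (∀ x, T' (T x) = x) ∧ (∀ y, T (T' y) = y)

/-- The pair `(A,B)` is normalized if `A B* = B A*` and `M^{A,B}` is boundedly invertible. -/
noncomputable def IsNormalized (A B : G →L[ℂ] G) : Prop :=
  A ∘L adjoint B = B ∘L adjoint A ∧ IsBoundedlyInvertible (MAB A B)

section Aux

local notation "⟪" x ", " y "⟫" => @inner ℂ _ _ x y

/-- `τ (x₁, x₂) = x₂ + i x₁`. -/
noncomputable def tauL : (G × G) →L[ℂ] G := snd ℂ G G + Complex.I • fst ℂ G G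

/-- `σ (x₁, x₂) = x₂ - i x₁`. -/
noncomputable def sigL : (G × G) →L[ℂ] G := snd ℂ G G - Complex.I • fst ℂ G G

lemma tauL_apply (p : G × G) : tauL p = p.2 + Complex.I • p.1 := rfl

lemma sigL_apply (p : G × G) : sigL p = p.2 - Complex.I • p.1 := rfl

lemma key_inner {Λ : Submodule ℂ (G × G)} (hΛ : IsSelfAdjointRel Λ)
    {p q : G × G} (hp : p ∈ Λ) (hq : q ∈ Λ) :
    ⟪sigL p, sigL q⟫ = ⟪tauL p, tauL q⟫ := by
  have h1 : ⟪p.1, q.2⟫ = ⟪p.2, q.1⟫ := by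
    rw [IsSelfAdjointRel] at hΛ
    rw [← hΛ] at hp
    exact hp q hq
  simp only [tauL_apply, sigL_apply, inner_sub_left, inner_sub_right, inner_add_left,
    inner_add_right, inner_smul_left, inner_smul_right, Complex.conj_I]
  linear_combination (2 * Complex.I) * h1

lemma norm_sig_eq_norm_tau {Λ : Submodule ℂ (G × G)} (hΛ : IsSelfAdjointRel Λ)
    {p : G × G} (hp : p ∈ Λ) : ‖sigL p‖ = ‖tauL p‖ := by
  have h := key_inner hΛ hp hp
  rw [inner_self_eq_norm_sq_to_K, inner_self_eq_norm_sq_to_K] at h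
  have h2 : (‖sigL p‖ : ℝ) ^ 2 = ‖tauL p‖ ^ 2 := by exact_mod_cast h
  calc ‖sigL p‖ = Real.sqrt (‖sigL p‖ ^ 2) := (Real.sqrt_sq (norm_nonneg _)).symm
    _ = Real.sqrt (‖tauL p‖ ^ 2) := by rw [h2]
    _ = ‖tauL p‖ := Real.sqrt_sq (norm_nonneg _)

lemma norm_tau_sq {Λ : Submodule ℂ (G × G)} (hΛ : IsSelfAdjointRel Λ)
    {p : G × G} (hp : p ∈ Λ) : ‖tauL p‖ ^ 2 = ‖p.1‖ ^ 2 + ‖p.2‖ ^ 2 := by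
  have h1 : ⟪p.1, p.2⟫ = ⟪p.2, p.1⟫ := by
    have hp' := hp
    rw [IsSelfAdjointRel] at hΛ
    rw [← hΛ] at hp'
    exact hp' p hp
  have h : ⟪tauL p, tauL p⟫ = ⟪p.1, p.1⟫ + ⟪p.2, p.2⟫ := by
    simp only [tauL_apply, inner_add_left, inner_add_right, inner_smul_left,
      inner_smul_right, Complex.conj_I]
    linear_combination (-Complex.I) * h1 + (-(inner ℂ p.1 p.1 : ℂ)) * Complex.I_sq
  rw [inner_self_eq_norm_sq_to_K, inner_self_eq_norm_sq_to_K,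
    inner_self_eq_norm_sq_to_K] at h
  exact_mod_cast h

lemma norm_le_norm_tau {Λ : Submodule ℂ (G × G)} (hΛ : IsSelfAdjointRel Λ)
    {p : G × G} (hp : p ∈ Λ) : ‖p‖ ≤ ‖tauL p‖ := by
  have h := norm_tau_sq hΛ hp
  have hn : ‖p‖ = max ‖p.1‖ ‖p.2‖ := rfl
  have h1 : ‖p‖ ^ 2 ≤ ‖tauL p‖ ^ 2 := by
    rw [h, hn]
    rcases max_cases ‖p.1‖ ‖p.2‖ with ⟨he, _⟩ | ⟨he, _⟩ <;> rw [he] <;> nlinarith [sq_nonneg ‖p.1‖, sq_nonneg ‖p.2‖]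
  calc ‖p‖ = Real.sqrt (‖p‖ ^ 2) := (Real.sqrt_sq (norm_nonneg _)).symm
    _ ≤ Real.sqrt (‖tauL p‖ ^ 2) := Real.sqrt_le_sqrt h1
    _ = ‖tauL p‖ := Real.sqrt_sq (norm_nonneg _)

lemma isClosed_selfAdjointRel {Λ : Submodule ℂ (G × G)} (hΛ : IsSelfAdjointRel Λ) :
    IsClosed (Λ : Set (G × G)) := by
  rw [IsSelfAdjointRel] at hΛ
  rw [← hΛ]
  have : ((relAdjoint Λ : Submodule ℂ (G × G)) : Set (G × G)) =
      ⋂ q ∈ Λ, {p : G × G | ⟪p.1, q.2⟫ = ⟪p.2, q.1⟫} := by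
    ext p
    simp only [SetLike.mem_coe, Set.mem_iInter, Set.mem_setOf_eq]
    rfl
  rw [this]
  exact isClosed_biInter fun q _ => isClosed_eq
    (continuous_fst.inner continuous_const) (continuous_snd.inner continuous_const)


lemma tauL_sub_sigL (p : G × G) : tauL p - sigL p = (2 * Complex.I) • p.1 := by
  simp only [tauL_apply, sigL_apply]
  module

lemma tauL_add_sigL (p : G × G) : tauL p + sigL p = (2 : ℂ) • p.2 := by
  simp only [tauL_apply, sigL_apply]
  module

lemma surj_aux {Λ : Submodule ℂ (G × G)} (hcl : IsClosed (Λ : Set (G × G)))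
    (L : (G × G) →L[ℂ] G)
    (hb : ∀ p ∈ Λ, ‖p‖ ≤ ‖L p‖)
    (ho : ∀ y : G, (∀ q ∈ Λ, ⟪L q, y⟫ = 0) → y = 0) :
    ∀ y : G, ∃ p ∈ Λ, L p = y := by
  haveI : CompleteSpace Λ := hcl.completeSpace_coe
  set f : Λ →L[ℂ] G := L.comp Λ.subtypeL with hf
  have hanti : AntilipschitzWith 1 f :=
    f.antilipschitz_of_bound (by intro x; simp only [NNReal.coe_one, one_mul]; exact hb x x.2)
  have hrange : IsClosed (Set.range f) := hanti.isClosed_range f.uniformContinuous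
  set M : Submodule ℂ G := Submodule.map (L : (G × G) →ₗ[ℂ] G) Λ with hM
  have hrange_eq : Set.range f = (M : Set G) := by
    ext y
    constructor
    · rintro ⟨x, rfl⟩
      exact ⟨x, x.2, rfl⟩
    · rintro ⟨p, hp, rfl⟩
      exact ⟨⟨p, hp⟩, rfl⟩
  rw [hrange_eq] at hrange
  haveI : CompleteSpace M := hrange.completeSpace_coe
  have horth : Mᗮ = ⊥ := by
    rw [Submodule.eq_bot_iff]
    intro y hy
    refine ho y fun q hq => ?_
    exact (Submodule.mem_orthogonal M y).mp hy (L q) ⟨q, hq, rfl⟩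
  have hMtop : M = ⊤ := Submodule.orthogonal_eq_bot_iff.mp horth
  intro y
  have : y ∈ M := hMtop ▸ Submodule.mem_top
  obtain ⟨p, hp, hpy⟩ := this
  exact ⟨p, hp, hpy⟩

lemma tau_surj {Λ : Submodule ℂ (G × G)} (hΛ : IsSelfAdjointRel Λ) :
    ∀ y : G, ∃ p ∈ Λ, tauL p = y := by
  refine surj_aux (isClosed_selfAdjointRel hΛ) tauL (fun p hp => norm_le_norm_tau hΛ hp) ?_
  intro y hy
  have hmem : ((y, Complex.I • y) : G × G) ∈ Λ := by
    rw [IsSelfAdjointRel] at hΛ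
    rw [← hΛ]
    intro q hq
    have h := hy q hq
    simp only [tauL_apply, inner_add_left, inner_smul_left, Complex.conj_I] at h
    have h2 := congrArg (starRingEnd ℂ) h
    simp only [map_add, map_mul, inner_conj_symm, Complex.conj_I, map_zero, map_neg] at h2
    show (inner ℂ y q.2 : ℂ) = inner ℂ (Complex.I • y) q.1
    rw [inner_smul_left, Complex.conj_I]
    linear_combination h2
  have h0 := norm_sig_eq_norm_tau hΛ hmem
  have hs : sigL ((y, Complex.I • y) : G × G) = 0 := by
    simp [sigL_apply]
  have ht : tauL ((y, Complex.I • y) : G × G) = (2 * Complex.I) • y := by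
    simp only [tauL_apply]
    module
  rw [hs, ht, norm_zero] at h0
  have : (2 * Complex.I) • y = 0 := by rwa [eq_comm, norm_eq_zero] at h0
  rcases smul_eq_zero.mp this with h | h
  · exact absurd h (by norm_num [Complex.ext_iff])
  · exact h

lemma sig_surj {Λ : Submodule ℂ (G × G)} (hΛ : IsSelfAdjointRel Λ) :
    ∀ y : G, ∃ p ∈ Λ, sigL p = y := by
  refine surj_aux (isClosed_selfAdjointRel hΛ) sigL
    (fun p hp => (norm_le_norm_tau hΛ hp).trans_eq (norm_sig_eq_norm_tau hΛ hp).symm) ?_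
  intro y hy
  have hmem : ((y, -(Complex.I • y)) : G × G) ∈ Λ := by
    rw [IsSelfAdjointRel] at hΛ
    rw [← hΛ]
    intro q hq
    have h := hy q hq
    simp only [sigL_apply, inner_sub_left, inner_smul_left, Complex.conj_I] at h
    have h2 := congrArg (starRingEnd ℂ) h
    simp only [map_sub, map_mul, inner_conj_symm, Complex.conj_I, map_zero, map_neg] at h2
    show (inner ℂ y q.2 : ℂ) = inner ℂ (-(Complex.I • y)) q.1
    rw [inner_neg_left, inner_smul_left, Complex.conj_I]
    linear_combination h2
  have h0 := norm_sig_eq_norm_tau hΛ hmem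
  have ht : tauL ((y, -(Complex.I • y)) : G × G) = 0 := by
    simp [tauL_apply]
  have hs : sigL ((y, -(Complex.I • y)) : G × G) = (-(2 * Complex.I)) • y := by
    simp only [sigL_apply]
    module
  rw [hs, ht, norm_zero] at h0
  have : (-(2 * Complex.I)) • y = 0 := by rwa [norm_eq_zero] at h0
  rcases smul_eq_zero.mp this with h | h
  · exact absurd h (by norm_num [Complex.ext_iff])
  · exact h

lemma cayley_exists {Λ : Submodule ℂ (G × G)} (hΛ : IsSelfAdjointRel Λ) :
    ∃ U : G →L[ℂ] G, U ∈ unitary (G →L[ℂ] G) ∧ ∀ p ∈ Λ, U (tauL p) = sigL p := by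
  classical
  set tlin : Λ →ₗ[ℂ] G := (tauL.toLinearMap).comp Λ.subtype with htlin
  set slin : Λ →ₗ[ℂ] G := (sigL.toLinearMap).comp Λ.subtype with hslin
  have htapp : ∀ x : Λ, tlin x = tauL (x : G × G) := fun x => rfl
  have hsapp : ∀ x : Λ, slin x = sigL (x : G × G) := fun x => rfl
  have hnorm_eq : ∀ x : Λ, ‖slin x‖ = ‖tlin x‖ := fun x => norm_sig_eq_norm_tau hΛ x.2
  have htinj : Function.Injective tlin := by
    intro a b hab
    have h0 : tlin (a - b) = 0 := by rw [map_sub, hab, sub_self]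
    have h1 : ‖((a - b : Λ) : G × G)‖ ≤ ‖tauL ((a - b : Λ) : G × G)‖ :=
      norm_le_norm_tau hΛ (a - b).2
    rw [← htapp, h0, norm_zero] at h1
    have : ((a - b : Λ) : G × G) = 0 := norm_le_zero_iff.mp h1
    have : (a - b : Λ) = 0 := Subtype.ext (by simpa using this)
    exact sub_eq_zero.mp this
  have hsinj : Function.Injective slin := by
    intro a b hab
    apply htinj
    have h0 : slin (a - b) = 0 := by rw [map_sub, hab, sub_self]
    have h1 : ‖slin (a - b)‖ = ‖tlin (a - b)‖ := hnorm_eq _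
    rw [h0, norm_zero] at h1
    have h2 : tlin (a - b) = 0 := norm_eq_zero.mp h1.symm
    exact sub_eq_zero.mp (by rwa [map_sub] at h2)
  have htsurj : Function.Surjective tlin := by
    intro y
    obtain ⟨p, hp, hpy⟩ := tau_surj hΛ y
    exact ⟨⟨p, hp⟩, hpy⟩
  have hssurj : Function.Surjective slin := by
    intro y
    obtain ⟨p, hp, hpy⟩ := sig_surj hΛ y
    exact ⟨⟨p, hp⟩, hpy⟩
  set eT : Λ ≃ₗ[ℂ] G := LinearEquiv.ofBijective tlin ⟨htinj, htsurj⟩ with heT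
  set eS : Λ ≃ₗ[ℂ] G := LinearEquiv.ofBijective slin ⟨hsinj, hssurj⟩ with heS
  have heT_apply : ∀ x : Λ, eT x = tauL (x : G × G) := fun x => rfl
  have heS_apply : ∀ x : Λ, eS x = sigL (x : G × G) := fun x => rfl
  set U0 : G →ₗ[ℂ] G := slin.comp eT.symm.toLinearMap with hU0
  set V0 : G →ₗ[ℂ] G := tlin.comp eS.symm.toLinearMap with hV0
  have hU0norm : ∀ x : G, ‖U0 x‖ ≤ 1 * ‖x‖ := by
    intro x
    rw [one_mul]
    refine le_of_eq ?_
    calc ‖U0 x‖ = ‖slin (eT.symm x)‖ := rfl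
      _ = ‖tlin (eT.symm x)‖ := hnorm_eq _
      _ = ‖eT (eT.symm x)‖ := rfl
      _ = ‖x‖ := by rw [eT.apply_symm_apply]
  have hV0norm : ∀ x : G, ‖V0 x‖ ≤ 1 * ‖x‖ := by
    intro x
    rw [one_mul]
    refine le_of_eq ?_
    calc ‖V0 x‖ = ‖tlin (eS.symm x)‖ := rfl
      _ = ‖slin (eS.symm x)‖ := (hnorm_eq _).symm
      _ = ‖eS (eS.symm x)‖ := rfl
      _ = ‖x‖ := by rw [eS.apply_symm_apply]
  set U : G →L[ℂ] G := U0.mkContinuous 1 hU0norm with hU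
  set V : G →L[ℂ] G := V0.mkContinuous 1 hV0norm with hV
  have hUapp : ∀ p : G × G, (hp : p ∈ Λ) → U (tauL p) = sigL p := by
    intro p hp
    have h1 : eT.symm (tauL p) = ⟨p, hp⟩ := by
      rw [LinearEquiv.symm_apply_eq]
      rfl
    show U0 (tauL p) = sigL p
    show slin (eT.symm (tauL p)) = sigL p
    rw [h1]
    rfl
  have hVapp : ∀ p : G × G, (hp : p ∈ Λ) → V (sigL p) = tauL p := by
    intro p hp
    have h1 : eS.symm (sigL p) = ⟨p, hp⟩ := by
      rw [LinearEquiv.symm_apply_eq]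
      rfl
    show V0 (sigL p) = tauL p
    show tlin (eS.symm (sigL p)) = tauL p
    rw [h1]
    rfl
  have hadj : V = ContinuousLinearMap.adjoint U := by
    rw [ContinuousLinearMap.eq_adjoint_iff]
    intro x y
    obtain ⟨p, hp, hpx⟩ := sig_surj hΛ x
    obtain ⟨q, hq, hqy⟩ := tau_surj hΛ y
    rw [← hpx, ← hqy, hVapp p hp, hUapp q hq]
    exact (key_inner hΛ hp hq).symm
  refine ⟨U, ?_, fun p hp => hUapp p hp⟩
  rw [Unitary.mem_iff]
  constructor
  · ext x
    obtain ⟨p, hp, hpx⟩ := tau_surj hΛ x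
    rw [ContinuousLinearMap.mul_apply, ContinuousLinearMap.star_eq_adjoint, ← hadj,
      ContinuousLinearMap.one_apply, ← hpx, hUapp p hp, hVapp p hp]
  · ext x
    obtain ⟨p, hp, hpx⟩ := sig_surj hΛ x
    rw [ContinuousLinearMap.mul_apply, ContinuousLinearMap.star_eq_adjoint, ← hadj,
      ContinuousLinearMap.one_apply, ← hpx, hVapp p hp, hUapp p hp]

lemma mem_LambdaAB {A B : G →L[ℂ] G} {p : G × G} : p ∈ LambdaAB A B ↔ A p.1 = B p.2 :=
  Iff.rfl


end Aux

/-- Every self-adjoint linear relation has a unique Cayley transform: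
a unique unitary `U` with `Λ = Λ^{i(1+U), 1-U}`. -/
theorem exists_unique_cayley_transform (Λ : Submodule ℂ (G × G))
    (hΛ : IsSelfAdjointRel Λ) :
    ∃! U : G →L[ℂ] G, U ∈ unitary (G →L[ℂ] G) ∧
      Λ = LambdaAB (Complex.I • (1 + U)) (1 - U) := by
  obtain ⟨U, hUuni, hUtau⟩ := cayley_exists hΛ
  have hrel : Λ = LambdaAB (Complex.I • (1 + U)) (1 - U) := by
    ext p
    rw [mem_LambdaAB]
    simp only [ContinuousLinearMap.smul_apply, ContinuousLinearMap.add_apply,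
      ContinuousLinearMap.one_apply, ContinuousLinearMap.sub_apply]
    constructor
    · intro hp
      have h := hUtau p hp
      simp only [tauL_apply, sigL_apply, map_add, map_smul] at h
      linear_combination (norm := module) h
    · intro hp
      obtain ⟨q, hq, hqt⟩ := tau_surj hΛ (tauL p)
      have hUp : U (tauL p) = sigL p := by
        simp only [tauL_apply, sigL_apply, map_add, map_smul]
        linear_combination (norm := module) hp
      have hqs : sigL q = sigL p := by
        rw [← hUtau q hq, hqt, hUp]
      have h1 : (2 * Complex.I) • q.1 = (2 * Complex.I) • p.1 := by
        rw [← tauL_sub_sigL, ← tauL_sub_sigL, hqt, hqs]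
      have h2 : (2 : ℂ) • q.2 = (2 : ℂ) • p.2 := by
        rw [← tauL_add_sigL, ← tauL_add_sigL, hqt, hqs]
      have e1 : q.1 = p.1 := smul_right_injective G (by norm_num [Complex.ext_iff]) h1
      have e2 : q.2 = p.2 := smul_right_injective G (by norm_num) h2
      have : q = p := Prod.ext e1 e2
      rwa [← this]
  refine ⟨U, ⟨hUuni, hrel⟩, ?_⟩
  rintro W ⟨hWuni, hWrel⟩
  ext u
  set p : G × G := (u - U u, Complex.I • (u + U u)) with hpdef
  have hpU : p ∈ LambdaAB (Complex.I • (1 + U)) (1 - U) := by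
    rw [mem_LambdaAB]
    simp only [hpdef, ContinuousLinearMap.smul_apply, ContinuousLinearMap.add_apply,
      ContinuousLinearMap.one_apply, ContinuousLinearMap.sub_apply, map_sub, map_add, map_smul]
    module
  have hpΛ : p ∈ Λ := by rwa [hrel]
  rw [hWrel, mem_LambdaAB] at hpΛ
  simp only [hpdef, ContinuousLinearMap.smul_apply, ContinuousLinearMap.add_apply,
    ContinuousLinearMap.one_apply, ContinuousLinearMap.sub_apply, map_sub, map_add,
    map_smul] at hpΛ
  have h2 : (2 * Complex.I) • (W u) = (2 * Complex.I) • (U u) := by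
    linear_combination (norm := module) hpΛ
  exact smul_right_injective G (by norm_num [Complex.ext_iff]) h2
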